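/- Let e_k ∈ ℝ^n satisfy e_{k+1} = C(e_k) e_k − d_k where ‖d_k‖ ≤ B for all k ≥ N, and C(e) = ((eᵀe)^{1−1/s} − μ)/((eᵀe)^{1−1/s} + μ) with s ∈ (1,2), μ > 0. If for some k ≥ N we have β(e_k)‖e_k‖ > B(1 + √(1 − β(e_k))) where β(e) = 1 − C(e)², then ‖e_{k+1}‖² < ‖e_k‖². -/

import Mathlib

theorem stmt_16 (n : ℕ) (s μ B : ℝ) (hs1 : 1 < s) (hs2 : s < 2) (hμ : 0 < μ)
    (hB : 0 ≤ B) (N : ℕ)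
    (C : EuclideanSpace ℝ (Fin n) → ℝ)
    (hC : ∀ e, C e = ((‖e‖ ^ 2 : ℝ) ^ (1 - 1 / s) - μ) /
        ((‖e‖ ^ 2 : ℝ) ^ (1 - 1 / s) + μ))
    (e d : ℕ → EuclideanSpace ℝ (Fin n))
    (hd : ∀ k ≥ N, ‖d k‖ ≤ B)
    (hrec : ∀ k, e (k + 1) = C (e k) • e k - d k)
    (k : ℕ) (hk : N ≤ k)
    (hcond : B * (1 + Real.sqrt (1 - (1 - (C (e k)) ^ 2))) <
      (1 - (C (e k)) ^ 2) * ‖e k‖) :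
    ‖e (k + 1)‖ ^ 2 < ‖e k‖ ^ 2 := by
  set c := C (e k) with hc
  set a := ‖e k‖ with ha
  have ha0 : 0 ≤ a := norm_nonneg _
  -- |c| ≤ 1
  have hx0 : (0:ℝ) ≤ (a ^ 2 : ℝ) ^ (1 - 1 / s) := Real.rpow_nonneg (by positivity) _
  have hden : (0:ℝ) < (a ^ 2 : ℝ) ^ (1 - 1 / s) + μ := by linarith
  have hc1 : |c| ≤ 1 := by
    rw [hc, hC]
    rw [abs_div, abs_of_pos hden, div_le_one hden, abs_le]
    constructor <;> linarith
  have hsq : Real.sqrt (1 - (1 - c ^ 2)) = |c| := by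
    rw [show (1 - (1 - c ^ 2)) = c ^ 2 by ring, Real.sqrt_sq_eq_abs]
  rw [hsq] at hcond
  have hd' : ‖d k‖ ≤ B := hd k hk
  have hD0 : 0 ≤ ‖d k‖ := norm_nonneg _
  have hB' : B < (1 - |c|) * a := by
    have h1 : (0:ℝ) < 1 + |c| := by positivity
    nlinarith [sq_abs c]
  have key : |c| * a + ‖d k‖ < a := by nlinarith
  have hexp : ‖e (k + 1)‖ ^ 2 =
      c ^ 2 * a ^ 2 - 2 * (c * inner ℝ (e k) (d k)) + ‖d k‖ ^ 2 := by
    rw [hrec k, @norm_sub_sq_real, norm_smul, real_inner_smul_left,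
      Real.norm_eq_abs, mul_pow, sq_abs]
  have hCS : |(inner ℝ (e k) (d k) : ℝ)| ≤ a * ‖d k‖ := abs_real_inner_le_norm _ _
  have h2 : ‖e (k + 1)‖ ^ 2 ≤ (|c| * a + ‖d k‖) ^ 2 := by
    rw [hexp]
    have h3 : |c * (inner ℝ (e k) (d k) : ℝ)| ≤ |c| * (a * ‖d k‖) := by
      rw [abs_mul]
      exact mul_le_mul_of_nonneg_left hCS (abs_nonneg c)
    nlinarith [neg_abs_le (c * (inner ℝ (e k) (d k) : ℝ)), sq_abs c]
  calc ‖e (k + 1)‖ ^ 2 ≤ (|c| * a + ‖d k‖) ^ 2 := h2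
    _ < a ^ 2 := by
        apply pow_lt_pow_left₀ key (by positivity)
        norm_num
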